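/- arXiv:2409.03132 — 3 statements merged into one kernel-verified Lean document; each statement's English description precedes it below -/
import Mathlib

section
/- Gronwall's Inequality III (Lemma A.4): Let E be a finite-dimensional real normed vector space, and let C₀, C₁, C₂, C₃ > 0. Let X⁰ : E → E be Lipschitz with constant C₃, and let X¹ : E × [0, ∞) → E satisfy ‖X¹(z, t)‖ ≤ C₁ t + C₂ for all z ∈ E and t ≥ 0. Fix ρ and ρ₁ with 0 < ρ₁ < ρ < 1 and k with 0 < k < (1 − ρ)/C₃. Then there exist ε₀ > 0 and K > 0 such that the following holds: for every ε with 0 < ε < ε₀, and for every pair of differentiable curves z₀, z_ε : [0, ∞) → E satisfying z₀'(t) = X⁰(z₀(t)), z_ε'(t) = X⁰(z_ε(t)) + ε X¹(z_ε(t), t) for all t ≥ 0, and ‖z₀(0) − z_ε(0)‖ ≤ C₀ ε, one has ‖z₀(t) − z_ε(t)‖ ≤ K ε^{ρ₁} for all t with 0 ≤ t ≤ k·ln(1/ε). -/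
open Real

/-- Gronwall's Inequality III (Lemma A.4). -/
theorem gronwall_III {E : Type*} [NormedAddCommGroup E] [NormedSpace ℝ E]
    [FiniteDimensional ℝ E]
    (C₀ C₁ C₂ C₃ : ℝ) (hC₀ : 0 < C₀) (hC₁ : 0 < C₁) (hC₂ : 0 < C₂) (hC₃ : 0 < C₃)
    (X0 : E → E) (hX0 : LipschitzWith (Real.toNNReal C₃) X0)
    (X1 : E → ℝ → E) (hX1 : ∀ z t, 0 ≤ t → ‖X1 z t‖ ≤ C₁ * t + C₂)
    (ρ ρ₁ k : ℝ) (hρ₁ : 0 < ρ₁) (hρ₁ρ : ρ₁ < ρ) (hρ : ρ < 1)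
    (hk : 0 < k) (hkC : k < (1 - ρ) / C₃) :
    ∃ ε₀ > 0, ∃ K > 0, ∀ ε, 0 < ε → ε < ε₀ →
      ∀ z₀ zε : ℝ → E,
        (∀ t, 0 ≤ t → HasDerivAt z₀ (X0 (z₀ t)) t) →
        (∀ t, 0 ≤ t → HasDerivAt zε (X0 (zε t) + ε • X1 (zε t) t) t) →
        ‖z₀ 0 - zε 0‖ ≤ C₀ * ε →
        ∀ t, 0 ≤ t → t ≤ k * Real.log (1 / ε) →
          ‖z₀ t - zε t‖ ≤ K * ε ^ ρ₁ := by
  have ha : (0:ℝ) < ρ - ρ₁ := by linarith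
  have hC3k : C₃ * k < 1 - ρ := by
    have := (lt_div_iff₀ hC₃).mp hkC; linarith
  refine ⟨1, one_pos, C₀ + C₂ / C₃ + C₁ * k / (C₃ * (ρ - ρ₁)), by positivity, ?_⟩
  intro ε hε hε1 z₀ zε hz₀ hzε h0 t ht htb
  set L := Real.log (1 / ε) with hLdef
  have hL0 : 0 < L := Real.log_pos (one_lt_one_div hε hε1)
  set b := k * L with hbdef
  have hb0 : 0 < b := mul_pos hk hL0
  -- Gronwall
  have key : ∀ s ∈ Set.Icc (0:ℝ) b, ‖z₀ s - zε s‖ ≤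
      gronwallBound (C₀ * ε) C₃ (ε * (C₁ * b + C₂)) (s - 0) := by
    apply norm_le_gronwallBound_of_norm_deriv_right_le
      (f' := fun τ => X0 (z₀ τ) - (X0 (zε τ) + ε • X1 (zε τ) τ))
    · intro s hs
      exact (((hz₀ s hs.1).sub (hzε s hs.1)).continuousAt).continuousWithinAt
    · intro s hs
      exact ((hz₀ s hs.1).sub (hzε s hs.1)).hasDerivWithinAt
    · simpa using h0
    · intro s hs
      have hs0 : 0 ≤ s := hs.1
      have hsb : s ≤ b := hs.2.le
      have hlip : ‖X0 (z₀ s) - X0 (zε s)‖ ≤ C₃ * ‖z₀ s - zε s‖ := by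
        have := hX0.dist_le_mul (z₀ s) (zε s)
        rw [Real.coe_toNNReal C₃ hC₃.le] at this
        simpa [dist_eq_norm] using this
      have hX1b : ‖ε • X1 (zε s) s‖ ≤ ε * (C₁ * b + C₂) := by
        rw [norm_smul, Real.norm_eq_abs, abs_of_pos hε]
        have h1 := hX1 (zε s) s hs0
        have : C₁ * s + C₂ ≤ C₁ * b + C₂ := by nlinarith
        nlinarith
      calc ‖X0 (z₀ s) - (X0 (zε s) + ε • X1 (zε s) s)‖
          ≤ ‖X0 (z₀ s) - X0 (zε s)‖ + ‖ε • X1 (zε s) s‖ := by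
            rw [sub_add_eq_sub_sub]; exact norm_sub_le _ _
        _ ≤ C₃ * ‖z₀ s - zε s‖ + ε * (C₁ * b + C₂) := add_le_add hlip hX1b
  have hkey := key t ⟨ht, htb⟩
  rw [gronwallBound_of_K_ne_0 hC₃.ne'] at hkey
  -- bound gronwallBound by (δ + ε'/K) * exp (K b)
  have hexpmono : Real.exp (C₃ * (t - 0)) ≤ Real.exp (C₃ * b) := by
    apply Real.exp_le_exp.mpr; nlinarith
  have hexp0 : (0:ℝ) < Real.exp (C₃ * (t - 0)) := Real.exp_pos _
  have hq : 0 ≤ ε * (C₁ * b + C₂) / C₃ := by positivity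
  have step1 : ‖z₀ t - zε t‖ ≤ (C₀ * ε + ε * (C₁ * b + C₂) / C₃) * Real.exp (C₃ * b) := by
    have h1 : ε * (C₁ * b + C₂) / C₃ * (Real.exp (C₃ * (t - 0)) - 1) ≤
        ε * (C₁ * b + C₂) / C₃ * Real.exp (C₃ * (t - 0)) := by nlinarith
    have h2 : C₀ * ε * Real.exp (C₃ * (t - 0)) ≤ C₀ * ε * Real.exp (C₃ * b) := by
      have : 0 ≤ C₀ * ε := by positivity
      exact mul_le_mul_of_nonneg_left hexpmono this
    have h3 : ε * (C₁ * b + C₂) / C₃ * Real.exp (C₃ * (t - 0)) ≤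
        ε * (C₁ * b + C₂) / C₃ * Real.exp (C₃ * b) :=
      mul_le_mul_of_nonneg_left hexpmono hq
    simp only at hkey
    nlinarith [hkey]
  -- exp (C₃ * b) = ε ^ (-(C₃ * k))
  have hlogε : Real.log ε = -L := by rw [hLdef, one_div, Real.log_inv]; ring
  have hexpb : Real.exp (C₃ * b) = ε ^ (-(C₃ * k)) := by
    rw [Real.rpow_def_of_pos hε, hlogε, hbdef]; ring_nf
  rw [hexpb] at step1
  -- rpow arithmetic
  have hr1 : ε * ε ^ (-(C₃ * k)) = ε ^ (1 - C₃ * k) := by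
    nth_rewrite 1 [← Real.rpow_one ε]
    rw [← Real.rpow_add hε]; ring_nf
  have hA : ε ^ (1 - C₃ * k) ≤ ε ^ ρ₁ :=
    Real.rpow_le_rpow_of_exponent_ge hε hε1.le (by linarith)
  -- log bound : L ≤ ε ^ (-(ρ - ρ₁)) / (ρ - ρ₁)
  have hLb : L ≤ ε ^ (-(ρ - ρ₁)) / (ρ - ρ₁) := by
    have h1 : (ρ - ρ₁) * L = Real.log ((1/ε) ^ (ρ - ρ₁)) := by
      rw [Real.log_rpow (by positivity)]
    have h2 : Real.log ((1/ε) ^ (ρ - ρ₁)) ≤ (1/ε) ^ (ρ - ρ₁) - 1 :=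
      Real.log_le_sub_one_of_pos (by positivity)
    have h3 : ((1:ℝ)/ε) ^ (ρ - ρ₁) = ε ^ (-(ρ - ρ₁)) := by
      rw [one_div, ← Real.rpow_neg_one ε, ← Real.rpow_mul hε.le]
      ring_nf
    rw [le_div_iff₀ ha]
    rw [h3] at h1 h2
    linarith
  have hr2 : ε ^ (-(ρ - ρ₁)) * ε ^ (1 - C₃ * k) = ε ^ (1 - C₃ * k - (ρ - ρ₁)) := by
    rw [← Real.rpow_add hε]; ring_nf
  have hA2 : ε ^ (1 - C₃ * k - (ρ - ρ₁)) ≤ ε ^ ρ₁ :=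
    Real.rpow_le_rpow_of_exponent_ge hε hε1.le (by linarith)
  have hQpos : (0:ℝ) < ε ^ (1 - C₃ * k) := Real.rpow_pos_of_pos hε _
  have hPpos : (0:ℝ) < ε ^ (-(ρ - ρ₁)) := Real.rpow_pos_of_pos hε _
  have hB : L * ε ^ (1 - C₃ * k) ≤ ε ^ ρ₁ / (ρ - ρ₁) := by
    calc L * ε ^ (1 - C₃ * k)
        ≤ (ε ^ (-(ρ - ρ₁)) / (ρ - ρ₁)) * ε ^ (1 - C₃ * k) :=
          mul_le_mul_of_nonneg_right hLb hQpos.le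
      _ = ε ^ (1 - C₃ * k - (ρ - ρ₁)) / (ρ - ρ₁) := by rw [← hr2]; ring
      _ ≤ ε ^ ρ₁ / (ρ - ρ₁) := by gcongr
  have heq : (C₀ * ε + ε * (C₁ * b + C₂) / C₃) * ε ^ (-(C₃ * k))
      = (C₀ + C₂ / C₃) * ε ^ (1 - C₃ * k) + (C₁ * k / C₃) * (L * ε ^ (1 - C₃ * k)) := by
    rw [hbdef]
    field_simp
    rw [show k * C₃ = C₃ * k from mul_comm k C₃]
    linear_combination (C₀ * C₃ + C₂ + C₁ * k * L) * hr1
  rw [heq] at step1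
  have hfin : (C₀ + C₂ / C₃) * ε ^ (1 - C₃ * k) + (C₁ * k / C₃) * (L * ε ^ (1 - C₃ * k))
      ≤ (C₀ + C₂ / C₃ + C₁ * k / (C₃ * (ρ - ρ₁))) * ε ^ ρ₁ := by
    have t1 : (C₀ + C₂ / C₃) * ε ^ (1 - C₃ * k) ≤ (C₀ + C₂ / C₃) * ε ^ ρ₁ :=
      mul_le_mul_of_nonneg_left hA (by positivity)
    have t2 : (C₁ * k / C₃) * (L * ε ^ (1 - C₃ * k)) ≤ (C₁ * k / C₃) * (ε ^ ρ₁ / (ρ - ρ₁)) :=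
      mul_le_mul_of_nonneg_left hB (by positivity)
    have t3 : (C₁ * k / C₃) * (ε ^ ρ₁ / (ρ - ρ₁)) = C₁ * k / (C₃ * (ρ - ρ₁)) * ε ^ ρ₁ := by
      field_simp
    linarith [t3 ▸ t2]
  linarith
end

section
/- Persistence of a non-degenerate zero under C¹-small perturbation (abstract form of Lemma 7.2): Let M : ℝ → ℝ be continuously differentiable, let τ* ∈ ℝ satisfy M(τ*) = 0 and M'(τ*) ≠ 0, and let C > 0, ρ > 0, and let J be an open interval containing τ*. Suppose (f_ε)_{ε > 0} is a family of continuously differentiable functions ℝ → ℝ such that |f_ε(τ) − ε·M(τ)| ≤ C·ε^{1+ρ} and |f_ε'(τ) − ε·M'(τ)| ≤ C·ε^{1+ρ} for all τ ∈ J and all ε > 0. Then there exist ε₁ > 0 and K > 0 such that for every ε with 0 < ε < ε₁ there exists τ_ε ∈ J with f_ε(τ_ε) = 0, |τ_ε − τ*| ≤ K·ε^{ρ}, and f_ε'(τ_ε) ≠ 0. -/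
open Real

set_option maxHeartbeats 800000

lemma aux_pos
    (M : ℝ → ℝ) (hM : ContDiff ℝ 1 M)
    (τstar : ℝ) (hMz : M τstar = 0) (hMd : 0 < deriv M τstar)
    (C ρ : ℝ) (hC : 0 < C) (hρ : 0 < ρ)
    (a b : ℝ) (hτstar : τstar ∈ Set.Ioo a b)
    (f : ℝ → ℝ → ℝ)
    (hf : ∀ ε : ℝ, 0 < ε → ContDiff ℝ 1 (f ε))
    (hclose : ∀ ε : ℝ, 0 < ε → ∀ τ ∈ Set.Ioo a b,
      |f ε τ - ε * M τ| ≤ C * ε ^ (1 + ρ))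
    (hclose' : ∀ ε : ℝ, 0 < ε → ∀ τ ∈ Set.Ioo a b,
      |deriv (f ε) τ - ε * deriv M τ| ≤ C * ε ^ (1 + ρ)) :
    ∃ ε₁ > 0, ∃ K > 0, ∀ ε : ℝ, 0 < ε → ε < ε₁ →
      ∃ τε ∈ Set.Ioo a b,
        f ε τε = 0 ∧ |τε - τstar| ≤ K * ε ^ ρ ∧ deriv (f ε) τε ≠ 0 := by
  set m := deriv M τstar with hm
  have hcont : Continuous (deriv M) := hM.continuous_deriv le_rfl
  obtain ⟨δc, hδc, hball⟩ := Metric.continuousAt_iff.1 (hcont.continuousAt (x := τstar)) (m/2) (by linarith)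
  set δ₀ : ℝ := min δc (min (τstar - a) (b - τstar)) with hδ₀def
  have hδ₀ : 0 < δ₀ := by
    simp only [hδ₀def, lt_min_iff]
    exact ⟨hδc, by linarith [hτstar.1], by linarith [hτstar.2]⟩
  set δ : ℝ := δ₀ / 2 with hδdef
  have hδ : 0 < δ := by positivity
  -- derivative lower bound and membership on the δ-neighborhood
  have hderiv_lb : ∀ τ : ℝ, |τ - τstar| ≤ δ → m/2 ≤ deriv M τ := by
    intro τ hτ
    have h1 : dist τ τstar < δc := by
      rw [Real.dist_eq]
      have : δ < δ₀ := by rw [hδdef]; linarith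
      have : δ₀ ≤ δc := min_le_left _ _
      linarith
    have := hball h1
    rw [Real.dist_eq] at this
    have := abs_lt.1 this
    linarith [this.1, this.2]
  have hmem : ∀ τ : ℝ, |τ - τstar| ≤ δ → τ ∈ Set.Ioo a b := by
    intro τ hτ
    have h2 : δ₀ ≤ τstar - a := (min_le_right δc _).trans (min_le_left _ _)
    have h3 : δ₀ ≤ b - τstar := (min_le_right δc _).trans (min_le_right _ _)
    have h4 : δ < δ₀ := by rw [hδdef]; linarith
    obtain ⟨h5, h6⟩ := abs_le.1 hτ
    constructor
    · linarith
    · linarith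
  set K : ℝ := 4 * C / m with hKdef
  have hK : 0 < K := by positivity
  set ε₁ : ℝ := min ((δ/K) ^ ρ⁻¹) ((m/(4*C)) ^ ρ⁻¹) with hε₁def
  have hε₁ : 0 < ε₁ := by
    apply lt_min
    · exact Real.rpow_pos_of_pos (by positivity) _
    · exact Real.rpow_pos_of_pos (by positivity) _
  refine ⟨ε₁, hε₁, K, hK, ?_⟩
  intro ε hε hεlt
  set E : ℝ := ε ^ ρ with hEdef
  have hE : 0 < E := Real.rpow_pos_of_pos hε _
  have hpow : ε ^ (1 + ρ) = ε * E := by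
    rw [hEdef, Real.rpow_add hε, Real.rpow_one]
  set t : ℝ := K * E with htdef
  have ht : 0 < t := by positivity
  -- t ≤ δ
  have hEδ : E < δ / K := by
    have h1 : ε < (δ/K) ^ ρ⁻¹ := lt_of_lt_of_le hεlt (min_le_left _ _)
    have h2 : ε ^ ρ < ((δ/K) ^ ρ⁻¹) ^ ρ := Real.rpow_lt_rpow hε.le h1 hρ
    rwa [Real.rpow_inv_rpow (by positivity) (ne_of_gt hρ)] at h2
  have htδ : t ≤ δ := by
    rw [htdef]
    have := mul_lt_mul_of_pos_left hEδ hK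
    rw [mul_div_cancel₀ _ (ne_of_gt hK)] at this
    linarith
  -- C * E ≤ m / 4
  have hCE : C * E < m / 4 := by
    have h1 : ε < (m/(4*C)) ^ ρ⁻¹ := lt_of_lt_of_le hεlt (min_le_right _ _)
    have h2 : ε ^ ρ < ((m/(4*C)) ^ ρ⁻¹) ^ ρ := Real.rpow_lt_rpow hε.le h1 hρ
    rw [Real.rpow_inv_rpow (by positivity) (ne_of_gt hρ)] at h2
    have := mul_lt_mul_of_pos_left h2 hC
    calc C * E < C * (m/(4*C)) := this
    _ = m / 4 := by field_simp
  -- MVT on the right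
  have hcontM : Continuous M := hM.continuous
  have hdiffM : Differentiable ℝ M := hM.differentiable one_ne_zero
  have hMr : (m/2) * t ≤ M (τstar + t) := by
    obtain ⟨ξ, hξmem, hξ⟩ := exists_deriv_eq_slope M (by linarith : τstar < τstar + t)
      hcontM.continuousOn hdiffM.differentiableOn
    have hξδ : |ξ - τstar| ≤ δ := by
      rw [abs_le]; constructor <;> [linarith [hξmem.1]; linarith [hξmem.2]]
    have hlb := hderiv_lb ξ hξδ
    rw [hMz] at hξ
    have : M (τstar + t) = deriv M ξ * t := by
      rw [show τstar + t - τstar = t by ring, sub_zero, eq_div_iff (ne_of_gt ht)] at hξ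
      nlinarith [hξ]
    rw [this]
    have := mul_le_mul_of_nonneg_right hlb ht.le
    linarith
  have hMl : M (τstar - t) ≤ -((m/2) * t) := by
    obtain ⟨ξ, hξmem, hξ⟩ := exists_deriv_eq_slope M (by linarith : τstar - t < τstar)
      hcontM.continuousOn hdiffM.differentiableOn
    have hξδ : |ξ - τstar| ≤ δ := by
      rw [abs_le]; constructor <;> [linarith [hξmem.1]; linarith [hξmem.2]]
    have hlb := hderiv_lb ξ hξδ
    rw [hMz] at hξ
    have : M (τstar - t) = -(deriv M ξ * t) := by
      rw [show τstar - (τstar - t) = t by ring, zero_sub, eq_div_iff (ne_of_gt ht)] at hξ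
      nlinarith [hξ]
    rw [this]
    have := mul_le_mul_of_nonneg_right hlb ht.le
    linarith
  have hrmem : τstar + t ∈ Set.Ioo a b := hmem _ (by rw [abs_of_pos (by linarith : (0:ℝ) < τstar + t - τstar)]; linarith)
  have hlmem : τstar - t ∈ Set.Ioo a b := hmem _ (by rw [abs_of_neg (by linarith : τstar - t - τstar < 0)]; linarith)
  -- sign of f at endpoints
  have hm0 : m ≠ 0 := ne_of_gt hMd
  have h3 : ε * ((m/2) * t) = 2 * C * (ε * E) := by
    rw [htdef, hKdef]; field_simp; ring
  have h4 : 0 < C * (ε * E) := by positivity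
  have hfr : 0 < f ε (τstar + t) := by
    have h1 := (abs_le.1 (hclose ε hε _ hrmem)).1
    rw [hpow] at h1
    have h2 : ε * ((m/2) * t) ≤ ε * M (τstar + t) :=
      mul_le_mul_of_nonneg_left hMr hε.le
    linarith
  have hfl : f ε (τstar - t) < 0 := by
    have h1 := (abs_le.1 (hclose ε hε _ hlmem)).2
    rw [hpow] at h1
    have h2 : ε * M (τstar - t) ≤ ε * (-((m/2) * t)) :=
      mul_le_mul_of_nonneg_left hMl hε.le
    have h5 : ε * (-((m/2) * t)) = -(2 * C * (ε * E)) := by linarith [h3]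
    linarith
  -- IVT
  have hcontf : ContinuousOn (f ε) (Set.Icc (τstar - t) (τstar + t)) :=
    ((hf ε hε).continuous).continuousOn
  have h0 : (0:ℝ) ∈ Set.Ioo (f ε (τstar - t)) (f ε (τstar + t)) := ⟨hfl, hfr⟩
  obtain ⟨τε, hτεmem, hτεz⟩ := intermediate_value_Ioo (by linarith : τstar - t ≤ τstar + t) hcontf h0
  have hτεd : |τε - τstar| ≤ t := by
    rw [abs_le]; constructor <;> [linarith [hτεmem.1]; linarith [hτεmem.2]]
  have hτεab : τε ∈ Set.Ioo a b := hmem _ (le_trans hτεd htδ)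
  refine ⟨τε, hτεab, hτεz, hτεd, ?_⟩
  -- derivative nonzero
  have h1 := (abs_le.1 (hclose' ε hε _ hτεab)).1
  rw [hpow] at h1
  have hlb := hderiv_lb τε (le_trans hτεd htδ)
  have : 0 < deriv (f ε) τε := by nlinarith
  exact ne_of_gt this

/-- Persistence of a non-degenerate zero under C¹-small perturbation
(abstract form of Lemma 7.2). -/
theorem nondegenerate_zero_persists
    (M : ℝ → ℝ) (hM : ContDiff ℝ 1 M)
    (τstar : ℝ) (hMz : M τstar = 0) (hMd : deriv M τstar ≠ 0)
    (C ρ : ℝ) (hC : 0 < C) (hρ : 0 < ρ)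
    (a b : ℝ) (hτstar : τstar ∈ Set.Ioo a b)
    (f : ℝ → ℝ → ℝ)
    (hf : ∀ ε : ℝ, 0 < ε → ContDiff ℝ 1 (f ε))
    (hclose : ∀ ε : ℝ, 0 < ε → ∀ τ ∈ Set.Ioo a b,
      |f ε τ - ε * M τ| ≤ C * ε ^ (1 + ρ))
    (hclose' : ∀ ε : ℝ, 0 < ε → ∀ τ ∈ Set.Ioo a b,
      |deriv (f ε) τ - ε * deriv M τ| ≤ C * ε ^ (1 + ρ)) :
    ∃ ε₁ > 0, ∃ K > 0, ∀ ε : ℝ, 0 < ε → ε < ε₁ →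
      ∃ τε ∈ Set.Ioo a b,
        f ε τε = 0 ∧ |τε - τstar| ≤ K * ε ^ ρ ∧ deriv (f ε) τε ≠ 0 := by
  rcases hMd.lt_or_gt with hneg | hpos
  · -- negative derivative: apply aux_pos to -M, -f
    have hMneg : deriv (fun τ => -M τ) τstar = -deriv M τstar := by
      simp [deriv.fun_neg]
    have hfneg : ∀ ε : ℝ, 0 < ε → ∀ τ : ℝ,
        deriv (fun τ' => -(f ε τ')) τ = -deriv (f ε) τ := by
      intro ε hε τ; simp [deriv.fun_neg]
    obtain ⟨ε₁, hε₁, K, hK, h⟩ := aux_pos (fun τ => -M τ) hM.neg τstar (by simp [hMz])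
      (by rw [hMneg]; linarith) C ρ hC hρ a b hτstar (fun ε τ => -(f ε τ))
      (fun ε hε => (hf ε hε).neg)
      (by
        intro ε hε τ hτ
        have hd : deriv (fun τ => -M τ) τ = -deriv M τ := by simp [deriv.fun_neg]
        have := hclose ε hε τ hτ
        rw [show -(f ε τ) - ε * -M τ = -(f ε τ - ε * M τ) by ring, abs_neg]
        exact this)
      (by
        intro ε hε τ hτ
        rw [hfneg ε hε τ]
        have hd : deriv (fun τ => -M τ) τ = -deriv M τ := by simp [deriv.fun_neg]
        rw [hd, show -deriv (f ε) τ - ε * -deriv M τ = -(deriv (f ε) τ - ε * deriv M τ) by ring,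
          abs_neg]
        exact hclose' ε hε τ hτ)
    refine ⟨ε₁, hε₁, K, hK, ?_⟩
    intro ε hε hεlt
    obtain ⟨τε, hmem, hz, hd, hnz⟩ := h ε hε hεlt
    refine ⟨τε, hmem, by simpa using hz, hd, ?_⟩
    rw [hfneg ε hε τε] at hnz
    simpa using hnz
  · exact aux_pos M hM τstar hMz hpos C ρ hC hρ a b hτstar f hf hclose hclose'
end

section
/- Second derivative of the autocorrelation of the Melnikov process (second spectral moment formula, part of Lemma on the process M): Let F : ℝ → ℝ be continuously differentiable with |F(s)| ≤ C·e^{−λ|s|} and |F'(s)| ≤ C·e^{−λ|s|} for all s ∈ ℝ, for some constants C ≥ 0 and λ > 0, and let r : ℝ → ℝ be twice continuously differentiable with r, r', and r'' bounded. Define ρ(h) = ∫_ℝ ∫_ℝ F(s₁)·F(s₂)·r(s₂ − s₁ + h) ds₁ ds₂. Then ρ is twice differentiable on ℝ and ρ''(h) = −∫_ℝ ∫_ℝ F'(s₁)·F'(s₂)·r(s₂ − s₁ + h) ds₁ ds₂ for every h ∈ ℝ. In particular, the second spectral moment χ₂ = −ρ''(0) equals ∫_ℝ ∫_ℝ F'(s₁)·F'(s₂)·r(s₂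 − s₁) ds₁ ds₂. -/
open MeasureTheory Real Set Filter

section MelnikovAux

variable {lam : ℝ}

private lemma melnikov_integrable_exp (hlam : 0 < lam) :
    Integrable (fun s : ℝ => Real.exp (-lam * |s|)) := by
  have hIoi : IntegrableOn (fun s : ℝ => Real.exp (-lam * |s|)) (Set.Ioi 0) := by
    refine (exp_neg_integrableOn_Ioi 0 hlam).congr_fun (fun x hx => ?_) measurableSet_Ioi
    rw [abs_of_pos hx]
  rw [← integrableOn_univ, ← Set.Iio_union_Ici (a := (0 : ℝ)), integrableOn_union,
    integrableOn_Ici_iff_integrableOn_Ioi]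
  refine ⟨?_, hIoi⟩
  rw [← (Measure.measurePreserving_neg (volume : Measure ℝ)).integrableOn_comp_preimage
      (Homeomorph.neg ℝ).measurableEmbedding]
  simpa [Function.comp_def, neg_preimage, neg_Iio, neg_zero, abs_neg] using hIoi

private lemma melnikov_integrable_of_bound (hlam : 0 < lam) {g : ℝ → ℝ} {D : ℝ}
    (hgc : Continuous g) (hb : ∀ s, |g s| ≤ D * Real.exp (-lam * |s|)) :
    Integrable g :=
  Integrable.mono' ((melnikov_integrable_exp hlam).const_mul D) hgc.aestronglyMeasurable
    (Filter.Eventually.of_forall fun s => by simpa [Real.norm_eq_abs] using hb s)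

private lemma melnikov_prod_pointwise_bound {f g w : ℝ → ℝ} {Df Dg M : ℝ}
    (hfb : ∀ s, |f s| ≤ Df * Real.exp (-lam * |s|))
    (hgb : ∀ s, |g s| ≤ Dg * Real.exp (-lam * |s|))
    (hM : ∀ x, |w x| ≤ M) (p : ℝ × ℝ) (c : ℝ) :
    ‖f p.1 * g p.2 * w (p.2 - p.1 + c)‖
      ≤ (Df * Real.exp (-lam * |p.1|)) * ((Dg * M) * Real.exp (-lam * |p.2|)) := by
  have h1 : (0 : ℝ) ≤ Df * Real.exp (-lam * |p.1|) := (abs_nonneg _).trans (hfb p.1)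
  have h2 : (0 : ℝ) ≤ Dg * Real.exp (-lam * |p.2|) := (abs_nonneg _).trans (hgb p.2)
  rw [Real.norm_eq_abs]
  calc |f p.1 * g p.2 * w (p.2 - p.1 + c)|
      = |f p.1| * |g p.2| * |w (p.2 - p.1 + c)| := by rw [abs_mul, abs_mul]
    _ ≤ (Df * Real.exp (-lam * |p.1|)) * (Dg * Real.exp (-lam * |p.2|)) * M :=
        mul_le_mul (mul_le_mul (hfb p.1) (hgb p.2) (abs_nonneg _) h1) (hM _)
          (abs_nonneg _) (mul_nonneg h1 h2)
    _ = (Df * Real.exp (-lam * |p.1|)) * ((Dg * M) * Real.exp (-lam * |p.2|)) := by ring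

private lemma melnikov_aesm {f g w : ℝ → ℝ}
    (hfc : Continuous f) (hgc : Continuous g) (hwc : Continuous w) (c : ℝ) :
    AEStronglyMeasurable (fun p : ℝ × ℝ => f p.1 * g p.2 * w (p.2 - p.1 + c))
      ((volume : Measure ℝ).prod volume) :=
  (((hfc.comp continuous_fst).mul (hgc.comp continuous_snd)).mul
    (hwc.comp ((continuous_snd.sub continuous_fst).add continuous_const))).aestronglyMeasurable

private lemma melnikov_integrable_prod (hlam : 0 < lam) {f g w : ℝ → ℝ} {Df Dg M : ℝ}
    (hfc : Continuous f) (hgc : Continuous g) (hwc : Continuous w)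
    (hfb : ∀ s, |f s| ≤ Df * Real.exp (-lam * |s|))
    (hgb : ∀ s, |g s| ≤ Dg * Real.exp (-lam * |s|))
    (hM : ∀ x, |w x| ≤ M) (h : ℝ) :
    Integrable (fun p : ℝ × ℝ => f p.1 * g p.2 * w (p.2 - p.1 + h))
      ((volume : Measure ℝ).prod volume) := by
  have base : Integrable (fun p : ℝ × ℝ =>
      (Df * Real.exp (-lam * |p.1|)) * ((Dg * M) * Real.exp (-lam * |p.2|)))
      ((volume : Measure ℝ).prod volume) :=
    Integrable.mul_prod ((melnikov_integrable_exp hlam).const_mul Df)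
      ((melnikov_integrable_exp hlam).const_mul (Dg * M))
  exact base.mono' (melnikov_aesm hfc hgc hwc h)
    (Filter.Eventually.of_forall fun p => melnikov_prod_pointwise_bound hfb hgb hM p h)

/-- Integration by parts when the argument of `w` is `s - c + h`. -/
private lemma melnikov_ibp_plus (hlam : 0 < lam) {f w : ℝ → ℝ} {Cf M₀ M₁ : ℝ}
    (hf : ContDiff ℝ 1 f)
    (hfb : ∀ s, |f s| ≤ Cf * Real.exp (-lam * |s|))
    (hf'b : ∀ s, |deriv f s| ≤ Cf * Real.exp (-lam * |s|))
    (hwd : Differentiable ℝ w) (hw'c : Continuous (deriv w))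
    (hw0 : ∀ x, |w x| ≤ M₀) (hw1 : ∀ x, |deriv w x| ≤ M₁) (c h : ℝ) :
    ∫ s : ℝ, f s * deriv w (s - c + h) = -∫ s : ℝ, deriv f s * w (s - c + h) := by
  have hv : ∀ x : ℝ, HasDerivAt (fun s => w (s - c + h)) (deriv w (x - c + h)) x := by
    intro x
    have hin : HasDerivAt (fun s : ℝ => s - c + h) 1 x := by
      simpa using ((hasDerivAt_id x).sub_const c).add_const h
    simpa [Function.comp_def] using ((hwd (x - c + h)).hasDerivAt).comp x hin
  have hu : ∀ x : ℝ, HasDerivAt f (deriv f x) x := fun x =>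
    ((hf.differentiable one_ne_zero) x).hasDerivAt
  have huv' : Integrable (fun x : ℝ => f x * deriv w (x - c + h)) :=
    melnikov_integrable_of_bound (D := Cf * M₁) hlam
      (hf.continuous.mul (hw'c.comp (by continuity)))
      (fun s => by
        rw [abs_mul]
        calc |f s| * |deriv w (s - c + h)| ≤ (Cf * Real.exp (-lam * |s|)) * M₁ :=
              mul_le_mul (hfb s) (hw1 _) (abs_nonneg _) ((abs_nonneg _).trans (hfb s))
          _ = Cf * M₁ * Real.exp (-lam * |s|) := by ring)
  have hu'v : Integrable (fun x : ℝ => deriv f x * w (x - c + h)) :=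
    melnikov_integrable_of_bound (D := Cf * M₀) hlam
      ((hf.continuous_deriv le_rfl).mul (hwd.continuous.comp (by continuity)))
      (fun s => by
        rw [abs_mul]
        calc |deriv f s| * |w (s - c + h)| ≤ (Cf * Real.exp (-lam * |s|)) * M₀ :=
              mul_le_mul (hf'b s) (hw0 _) (abs_nonneg _) ((abs_nonneg _).trans (hf'b s))
          _ = Cf * M₀ * Real.exp (-lam * |s|) := by ring)
  have huv : Integrable (fun x : ℝ => f x * w (x - c + h)) :=
    melnikov_integrable_of_bound (D := Cf * M₀) hlam
      (hf.continuous.mul (hwd.continuous.comp (by continuity)))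
      (fun s => by
        rw [abs_mul]
        calc |f s| * |w (s - c + h)| ≤ (Cf * Real.exp (-lam * |s|)) * M₀ :=
              mul_le_mul (hfb s) (hw0 _) (abs_nonneg _) ((abs_nonneg _).trans (hfb s))
          _ = Cf * M₀ * Real.exp (-lam * |s|) := by ring)
  exact integral_mul_deriv_eq_deriv_mul_of_integrable (fun x _ => hu x) (fun x _ => hv x) huv' hu'v huv

/-- Integration by parts when the argument of `w` is `c - s + h`. -/
private lemma melnikov_ibp_minus (hlam : 0 < lam) {f w : ℝ → ℝ} {Cf M₀ M₁ : ℝ}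
    (hf : ContDiff ℝ 1 f)
    (hfb : ∀ s, |f s| ≤ Cf * Real.exp (-lam * |s|))
    (hf'b : ∀ s, |deriv f s| ≤ Cf * Real.exp (-lam * |s|))
    (hwd : Differentiable ℝ w) (hw'c : Continuous (deriv w))
    (hw0 : ∀ x, |w x| ≤ M₀) (hw1 : ∀ x, |deriv w x| ≤ M₁) (c h : ℝ) :
    ∫ s : ℝ, f s * deriv w (c - s + h) = ∫ s : ℝ, deriv f s * w (c - s + h) := by
  have hv : ∀ x : ℝ, HasDerivAt (fun s => w (c - s + h)) (-deriv w (c - x + h)) x := by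
    intro x
    have hin : HasDerivAt (fun s : ℝ => c - s + h) (-1) x := by
      simpa using ((hasDerivAt_id x).const_sub c).add_const h
    have := ((hwd (c - x + h)).hasDerivAt).comp x hin
    simpa [mul_neg_one, Function.comp_def] using this
  have hu : ∀ x : ℝ, HasDerivAt f (deriv f x) x := fun x =>
    ((hf.differentiable one_ne_zero) x).hasDerivAt
  have huv' : Integrable (fun x : ℝ => f x * -deriv w (c - x + h)) := by
    have : Integrable (fun x : ℝ => f x * deriv w (c - x + h)) :=
      melnikov_integrable_of_bound (D := Cf * M₁) hlam
        (hf.continuous.mul (hw'c.comp (by continuity)))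
        (fun s => by
          rw [abs_mul]
          calc |f s| * |deriv w (c - s + h)| ≤ (Cf * Real.exp (-lam * |s|)) * M₁ :=
                mul_le_mul (hfb s) (hw1 _) (abs_nonneg _) ((abs_nonneg _).trans (hfb s))
            _ = Cf * M₁ * Real.exp (-lam * |s|) := by ring)
    simp only [mul_neg]
    exact this.neg
  have hu'v : Integrable (fun x : ℝ => deriv f x * w (c - x + h)) :=
    melnikov_integrable_of_bound (D := Cf * M₀) hlam
      ((hf.continuous_deriv le_rfl).mul (hwd.continuous.comp (by continuity)))
      (fun s => by
        rw [abs_mul]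
        calc |deriv f s| * |w (c - s + h)| ≤ (Cf * Real.exp (-lam * |s|)) * M₀ :=
              mul_le_mul (hf'b s) (hw0 _) (abs_nonneg _) ((abs_nonneg _).trans (hf'b s))
          _ = Cf * M₀ * Real.exp (-lam * |s|) := by ring)
  have huv : Integrable (fun x : ℝ => f x * w (c - x + h)) :=
    melnikov_integrable_of_bound (D := Cf * M₀) hlam
      (hf.continuous.mul (hwd.continuous.comp (by continuity)))
      (fun s => by
        rw [abs_mul]
        calc |f s| * |w (c - s + h)| ≤ (Cf * Real.exp (-lam * |s|)) * M₀ :=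
              mul_le_mul (hfb s) (hw0 _) (abs_nonneg _) ((abs_nonneg _).trans (hfb s))
          _ = Cf * M₀ * Real.exp (-lam * |s|) := by ring)
  have key := integral_mul_deriv_eq_deriv_mul_of_integrable (fun x _ => hu x) (fun x _ => hv x) huv' hu'v huv
  have key' : -∫ s : ℝ, f s * deriv w (c - s + h) = -∫ s : ℝ, deriv f s * w (c - s + h) := by
    rw [← key]
    simp only [mul_neg]
    rw [integral_neg]
  exact neg_injective key'

/-- Differentiation under the integral sign for the parametrized double integral. -/
private lemma melnikov_param_deriv (hlam : 0 < lam) {f g w : ℝ → ℝ} {Df Dg M₀ M₁ : ℝ}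
    (hfc : Continuous f) (hgc : Continuous g)
    (hfb : ∀ s, |f s| ≤ Df * Real.exp (-lam * |s|))
    (hgb : ∀ s, |g s| ≤ Dg * Real.exp (-lam * |s|))
    (hwd : Differentiable ℝ w) (hw'c : Continuous (deriv w))
    (hw0 : ∀ x, |w x| ≤ M₀) (hw1 : ∀ x, |deriv w x| ≤ M₁) (h : ℝ) :
    HasDerivAt
      (fun h' : ℝ => ∫ p : ℝ × ℝ, f p.1 * g p.2 * w (p.2 - p.1 + h')
        ∂((volume : Measure ℝ).prod volume))
      (∫ p : ℝ × ℝ, f p.1 * g p.2 * deriv w (p.2 - p.1 + h)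
        ∂((volume : Measure ℝ).prod volume)) h := by
  have bint : Integrable (fun p : ℝ × ℝ =>
      (Df * Real.exp (-lam * |p.1|)) * ((Dg * M₁) * Real.exp (-lam * |p.2|)))
      ((volume : Measure ℝ).prod volume) :=
    Integrable.mul_prod ((melnikov_integrable_exp hlam).const_mul Df)
      ((melnikov_integrable_exp hlam).const_mul (Dg * M₁))
  refine (hasDerivAt_integral_of_dominated_loc_of_deriv_le (𝕜 := ℝ)
    (F := fun h' (p : ℝ × ℝ) => f p.1 * g p.2 * w (p.2 - p.1 + h'))
    (F' := fun h' (p : ℝ × ℝ) => f p.1 * g p.2 * deriv w (p.2 - p.1 + h'))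
    (bound := fun p : ℝ × ℝ =>
      (Df * Real.exp (-lam * |p.1|)) * ((Dg * M₁) * Real.exp (-lam * |p.2|)))
    (Metric.ball_mem_nhds h one_pos) ?_ ?_ ?_ ?_ bint ?_).2
  · exact Filter.Eventually.of_forall fun x => melnikov_aesm hfc hgc hwd.continuous x
  · exact melnikov_integrable_prod hlam hfc hgc hwd.continuous hfb hgb hw0 h
  · exact melnikov_aesm hfc hgc hw'c h
  · exact Filter.Eventually.of_forall fun p => fun x _ =>
      melnikov_prod_pointwise_bound hfb hgb hw1 p x
  · refine Filter.Eventually.of_forall fun p => fun x _ => ?_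
    have hin : HasDerivAt (fun x : ℝ => p.2 - p.1 + x) 1 x := by
      simpa using (hasDerivAt_id x).const_add (p.2 - p.1)
    have := (((hwd (p.2 - p.1 + x)).hasDerivAt).comp x hin).const_mul (f p.1 * g p.2)
    simpa [mul_one, mul_assoc] using this

end MelnikovAux

/-- Second derivative of the autocorrelation of the Melnikov process
(second spectral moment formula). -/
theorem melnikov_autocorrelation_second_deriv
    (F r : ℝ → ℝ) (C lam : ℝ) (hC : 0 ≤ C) (hlam : 0 < lam)
    (hF : ContDiff ℝ 1 F)
    (hFb : ∀ s : ℝ, |F s| ≤ C * Real.exp (-lam * |s|))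
    (hF'b : ∀ s : ℝ, |deriv F s| ≤ C * Real.exp (-lam * |s|))
    (hr : ContDiff ℝ 2 r)
    (hrb : ∃ M₀, ∀ x : ℝ, |r x| ≤ M₀)
    (hr'b : ∃ M₁, ∀ x : ℝ, |deriv r x| ≤ M₁)
    (hr''b : ∃ M₂, ∀ x : ℝ, |deriv (deriv r) x| ≤ M₂) :
    (∀ h : ℝ, DifferentiableAt ℝ
      (fun h' : ℝ => ∫ s₁ : ℝ, ∫ s₂ : ℝ, F s₁ * F s₂ * r (s₂ - s₁ + h')) h) ∧
    (∀ h : ℝ, DifferentiableAt ℝ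
      (deriv fun h' : ℝ => ∫ s₁ : ℝ, ∫ s₂ : ℝ, F s₁ * F s₂ * r (s₂ - s₁ + h')) h) ∧
    (∀ h : ℝ,
      deriv (deriv fun h' : ℝ => ∫ s₁ : ℝ, ∫ s₂ : ℝ, F s₁ * F s₂ * r (s₂ - s₁ + h')) h
        = -∫ s₁ : ℝ, ∫ s₂ : ℝ, deriv F s₁ * deriv F s₂ * r (s₂ - s₁ + h)) ∧
    (-(deriv (deriv fun h' : ℝ =>
        ∫ s₁ : ℝ, ∫ s₂ : ℝ, F s₁ * F s₂ * r (s₂ - s₁ + h')) 0)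
      = ∫ s₁ : ℝ, ∫ s₂ : ℝ, deriv F s₁ * deriv F s₂ * r (s₂ - s₁)) := by
  obtain ⟨M₀, hM₀⟩ := hrb
  obtain ⟨M₁, hM₁⟩ := hr'b
  obtain ⟨M₂, hM₂⟩ := hr''b
  have hFc : Continuous F := hF.continuous
  have hF'c : Continuous (deriv F) := hF.continuous_deriv le_rfl
  have hr11 : ContDiff ℝ (1 + 1) r := by
    have : ((2 : ℕ) : WithTop ℕ∞) = ((1 : ℕ) : WithTop ℕ∞) + 1 := by norm_num
    exact this ▸ hr
  have hrd : Differentiable ℝ r := hr.differentiable two_ne_zero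
  have hr'cd : ContDiff ℝ 1 (deriv r) := (contDiff_succ_iff_deriv.mp hr11).2.2
  have hr'd : Differentiable ℝ (deriv r) := hr'cd.differentiable one_ne_zero
  have hrc : Continuous r := hr.continuous
  have hr'c : Continuous (deriv r) := hr'cd.continuous
  have hr''c : Continuous (deriv (deriv r)) := hr'cd.continuous_deriv le_rfl
  -- integrability of the various double-integrands
  have I0 : ∀ h : ℝ, Integrable (fun p : ℝ × ℝ => F p.1 * F p.2 * r (p.2 - p.1 + h))
      ((volume : Measure ℝ).prod volume) :=
    fun h => melnikov_integrable_prod hlam hFc hFc hrc hFb hFb hM₀ h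
  have I1 : ∀ h : ℝ, Integrable (fun p : ℝ × ℝ => F p.1 * F p.2 * deriv r (p.2 - p.1 + h))
      ((volume : Measure ℝ).prod volume) :=
    fun h => melnikov_integrable_prod hlam hFc hFc hr'c hFb hFb hM₁ h
  have I01 : ∀ h : ℝ, Integrable (fun p : ℝ × ℝ => F p.1 * deriv F p.2 * r (p.2 - p.1 + h))
      ((volume : Measure ℝ).prod volume) :=
    fun h => melnikov_integrable_prod hlam hFc hF'c hrc hFb hF'b hM₀ h
  have I11 : ∀ h : ℝ, Integrable
      (fun p : ℝ × ℝ => F p.1 * deriv F p.2 * deriv r (p.2 - p.1 + h))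
      ((volume : Measure ℝ).prod volume) :=
    fun h => melnikov_integrable_prod hlam hFc hF'c hr'c hFb hF'b hM₁ h
  have I2 : ∀ h : ℝ, Integrable
      (fun p : ℝ × ℝ => deriv F p.1 * deriv F p.2 * r (p.2 - p.1 + h))
      ((volume : Measure ℝ).prod volume) :=
    fun h => melnikov_integrable_prod hlam hF'c hF'c hrc hF'b hF'b hM₀ h
  -- the iterated integral equals the product integral
  have hρeq : (fun h' : ℝ => ∫ s₁ : ℝ, ∫ s₂ : ℝ, F s₁ * F s₂ * r (s₂ - s₁ + h'))
      = fun h' : ℝ => ∫ p : ℝ × ℝ, F p.1 * F p.2 * r (p.2 - p.1 + h')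
        ∂((volume : Measure ℝ).prod volume) :=
    funext fun h =>
      integral_integral (f := fun s₁ s₂ => F s₁ * F s₂ * r (s₂ - s₁ + h)) (I0 h)
  -- first integration by parts (inner variable s₂)
  have eq1 : ∀ h : ℝ,
      (∫ p : ℝ × ℝ, F p.1 * F p.2 * deriv r (p.2 - p.1 + h)
        ∂((volume : Measure ℝ).prod volume))
      = -∫ p : ℝ × ℝ, F p.1 * deriv F p.2 * r (p.2 - p.1 + h)
        ∂((volume : Measure ℝ).prod volume) := by
    intro h
    rw [← integral_integral (f := fun s₁ s₂ => F s₁ * F s₂ * deriv r (s₂ - s₁ + h)) (I1 h),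
      ← integral_integral (f := fun s₁ s₂ => F s₁ * deriv F s₂ * r (s₂ - s₁ + h)) (I01 h),
      ← integral_neg]
    congr 1
    funext s₁
    calc (∫ s₂ : ℝ, F s₁ * F s₂ * deriv r (s₂ - s₁ + h))
        = F s₁ * ∫ s₂ : ℝ, F s₂ * deriv r (s₂ - s₁ + h) := by
          rw [← integral_const_mul]
          congr 1
          funext s₂
          ring
      _ = F s₁ * -∫ s₂ : ℝ, deriv F s₂ * r (s₂ - s₁ + h) := by
          rw [melnikov_ibp_plus hlam hF hFb hF'b hrd hr'c hM₀ hM₁ s₁ h]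
      _ = -(F s₁ * ∫ s₂ : ℝ, deriv F s₂ * r (s₂ - s₁ + h)) := by ring
      _ = -∫ s₂ : ℝ, F s₁ * deriv F s₂ * r (s₂ - s₁ + h) := by
          rw [← integral_const_mul]
          congr 2
          funext s₂
          ring
  -- second integration by parts (variable s₁)
  have eq2 : ∀ h : ℝ,
      (∫ p : ℝ × ℝ, F p.1 * deriv F p.2 * deriv r (p.2 - p.1 + h)
        ∂((volume : Measure ℝ).prod volume))
      = ∫ p : ℝ × ℝ, deriv F p.1 * deriv F p.2 * r (p.2 - p.1 + h)
        ∂((volume : Measure ℝ).prod volume) := by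
    intro h
    rw [← integral_integral_symm
        (f := fun s₂ s₁ => F s₁ * deriv F s₂ * deriv r (s₂ - s₁ + h)) ((I11 h).swap),
      ← integral_integral_symm
        (f := fun s₂ s₁ => deriv F s₁ * deriv F s₂ * r (s₂ - s₁ + h)) ((I2 h).swap)]
    congr 1
    funext s₂
    calc (∫ s₁ : ℝ, F s₁ * deriv F s₂ * deriv r (s₂ - s₁ + h))
        = deriv F s₂ * ∫ s₁ : ℝ, F s₁ * deriv r (s₂ - s₁ + h) := by
          rw [← integral_const_mul]
          congr 1
          funext s₁
          ring
      _ = deriv F s₂ * ∫ s₁ : ℝ, deriv F s₁ * r (s₂ - s₁ + h) := by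
          rw [melnikov_ibp_minus hlam hF hFb hF'b hrd hr'c hM₀ hM₁ s₂ h]
      _ = ∫ s₁ : ℝ, deriv F s₁ * deriv F s₂ * r (s₂ - s₁ + h) := by
          rw [← integral_const_mul]
          congr 1
          funext s₁
          ring
  -- first derivative
  have hasDρ : ∀ h : ℝ, HasDerivAt
      (fun h' : ℝ => ∫ p : ℝ × ℝ, F p.1 * F p.2 * r (p.2 - p.1 + h')
        ∂((volume : Measure ℝ).prod volume))
      (-∫ p : ℝ × ℝ, F p.1 * deriv F p.2 * r (p.2 - p.1 + h)
        ∂((volume : Measure ℝ).prod volume)) h := by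
    intro h
    have := melnikov_param_deriv hlam hFc hFc hFb hFb hrd hr'c hM₀ hM₁ h
    rwa [eq1 h] at this
  -- second derivative
  have hasDρ1 : ∀ h : ℝ, HasDerivAt
      (fun h' : ℝ => -∫ p : ℝ × ℝ, F p.1 * deriv F p.2 * r (p.2 - p.1 + h')
        ∂((volume : Measure ℝ).prod volume))
      (-∫ p : ℝ × ℝ, deriv F p.1 * deriv F p.2 * r (p.2 - p.1 + h)
        ∂((volume : Measure ℝ).prod volume)) h := by
    intro h
    have := (melnikov_param_deriv hlam hFc hF'c hFb hF'b hrd hr'c hM₀ hM₁ h).neg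
    rwa [eq2 h] at this
  have hderiv1 : (deriv fun h' : ℝ => ∫ s₁ : ℝ, ∫ s₂ : ℝ, F s₁ * F s₂ * r (s₂ - s₁ + h'))
      = fun h : ℝ => -∫ p : ℝ × ℝ, F p.1 * deriv F p.2 * r (p.2 - p.1 + h)
        ∂((volume : Measure ℝ).prod volume) := by
    funext x
    rw [hρeq]
    exact (hasDρ x).deriv
  have part3 : ∀ h : ℝ,
      deriv (deriv fun h' : ℝ => ∫ s₁ : ℝ, ∫ s₂ : ℝ, F s₁ * F s₂ * r (s₂ - s₁ + h')) h
        = -∫ s₁ : ℝ, ∫ s₂ : ℝ, deriv F s₁ * deriv F s₂ * r (s₂ - s₁ + h) := by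
    intro h
    rw [hderiv1, (hasDρ1 h).deriv,
      integral_integral (f := fun s₁ s₂ => deriv F s₁ * deriv F s₂ * r (s₂ - s₁ + h)) (I2 h)]
  refine ⟨?_, ?_, part3, ?_⟩
  · intro h
    rw [hρeq]
    exact (hasDρ h).differentiableAt
  · intro h
    rw [hderiv1]
    exact (hasDρ1 h).differentiableAt
  · rw [part3 0, neg_neg]
    simp only [add_zero]
end
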